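/- Let A = (a_1,...,a_m)^T ∈ R^{m×d} and suppose for some subset S ⊆ {1,...,m} neither {a_j : j ∈ S} nor {a_j : j ∈ S^c} spans R^d. Then A is not phase retrievable: there exist x, y ∈ R^d with y ≠ x and y ≠ -x but |⟨a_j, x⟩| = |⟨a_j, y⟩| for all j. -/

import Mathlib

lemma aux_orth {d : ℕ} (s : Set (Fin d → ℝ)) (h : Submodule.span ℝ s ≠ ⊤) :
    ∃ u : Fin d → ℝ, u ≠ 0 ∧ ∀ w ∈ s, dotProduct w u = 0 := by
  let e : (Fin d → ℝ) ≃ₗ[ℝ] EuclideanSpace ℝ (Fin d) :=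
    (WithLp.linearEquiv 2 ℝ (Fin d → ℝ)).symm
  set K : Submodule ℝ (EuclideanSpace ℝ (Fin d)) :=
    Submodule.map (e : (Fin d → ℝ) →ₗ[ℝ] EuclideanSpace ℝ (Fin d)) (Submodule.span ℝ s) with hKdef
  have hK : K ≠ ⊤ := by
    intro htop
    apply h
    apply Submodule.map_injective_of_injective e.injective
    rw [← hKdef, htop, Submodule.map_top]
    exact (LinearEquiv.range e).symm
  have horth : Kᗮ ≠ ⊥ := by
    intro hbot
    exact hK (Submodule.orthogonal_eq_bot_iff.mp hbot)
  obtain ⟨u, hu, hu0⟩ := Submodule.exists_mem_ne_zero_of_ne_bot horth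
  refine ⟨e.symm u, by simpa using hu0, fun w hw => ?_⟩
  have hm : e w ∈ K := ⟨w, Submodule.subset_span hw, rfl⟩
  have := (Submodule.mem_orthogonal K u).mp hu (e w) hm
  have h2 : (inner ℝ (e w) u : ℝ) = dotProduct w (e.symm u) := by
    simp [PiLp.inner_apply, dotProduct, RCLike.inner_apply, e, mul_comm]
  rw [← h2, this]

theorem stmt_17 {m d : ℕ} (a : Fin m → Fin d → ℝ) (S : Finset (Fin m))
    (hS : Submodule.span ℝ (a '' {j | j ∈ S}) ≠ ⊤)
    (hSc : Submodule.span ℝ (a '' {j | j ∉ S}) ≠ ⊤) :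
    ∃ x y : Fin d → ℝ, y ≠ x ∧ y ≠ -x ∧
      ∀ j, |dotProduct (a j) x| = |dotProduct (a j) y| := by
  obtain ⟨u, hu0, hu⟩ := aux_orth _ hS
  obtain ⟨v, hv0, hv⟩ := aux_orth _ hSc
  refine ⟨u + v, u - v, ?_, ?_, ?_⟩
  · intro hxy
    apply hv0
    have h1 : u + v - (u - v) = 0 := by rw [hxy]; simp
    have h2 : (2 : ℝ) • v = 0 := by linear_combination (norm := module) h1
    simpa using smul_eq_zero.mp h2 |>.resolve_left (by norm_num)
  · intro hxy
    apply hu0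
    have h1 : (u - v) + (u + v) = 0 := by rw [hxy]; abel
    have h2 : (2 : ℝ) • u = 0 := by linear_combination (norm := module) h1
    simpa using smul_eq_zero.mp h2 |>.resolve_left (by norm_num)
  · intro j
    by_cases hj : j ∈ S
    · have h0 : dotProduct (a j) u = 0 := hu (a j) ⟨j, hj, rfl⟩
      simp [dotProduct_add, dotProduct_sub, h0, abs_neg]
    · have h0 : dotProduct (a j) v = 0 := hv (a j) ⟨j, hj, rfl⟩
      simp [dotProduct_add, dotProduct_sub, h0]
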